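/- Let a, b ∈ ℝ with b² < a². Then there exist m, n ∈ ℝ such that the function F = G4 + m·C1 + n·C2 : ℝ^6 → ℝ has vanishing derivative at the equilibrium e = (0, 0, b, 0, 0, a), and the Hessian quadratic form of F at e is definite (either positive definite or negative definite) on the subspace W = {v ∈ ℝ^6 : dC1(e)(v) = 0 and dC2(e)(v) = 0}. (Hence F is a Lyapunov function proving the nonlinear stability of e.) -/

import Mathlib

noncomputable section

/-- Casimir `C1`. -/
def C1fun (p : Fin 6 → ℝ) : ℝ :=
  (p 0 ^ 2 + p 1 ^ 2 + p 2 ^ 2 + p 3 ^ 2 + p 4 ^ 2 + p 5 ^ 2) / 2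

/-- Casimir `C2`. -/
def C2fun (p : Fin 6 → ℝ) : ℝ := p 0 * p 3 + p 1 * p 4 + p 2 * p 5

/-- The constant of motion `G4`. -/
def G4fun (l1 l2 l3 l4 : ℝ) (p : Fin 6 → ℝ) : ℝ :=
  p 3 ^ 2 / (l4^2 - l1^2) + p 4 ^ 2 / (l4^2 - l2^2) + p 5 ^ 2 / (l4^2 - l3^2)

def pr6 (i : Fin 6) : (Fin 6 → ℝ) →L[ℝ] ℝ :=
  ContinuousLinearMap.proj (R := ℝ) (φ := fun _ : Fin 6 => ℝ) i

@[simp] lemma pr6_apply (i : Fin 6) (v : Fin 6 → ℝ) : pr6 i v = v i := rfl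

lemma hasP (q : Fin 6 → ℝ) (i : Fin 6) :
    HasFDerivAt (fun p : Fin 6 → ℝ => p i) (pr6 i) q := (pr6 i).hasFDerivAt

lemma hasSq (q : Fin 6 → ℝ) (i : Fin 6) :
    HasFDerivAt (fun p : Fin 6 → ℝ => p i ^ 2) ((2 * q i) • pr6 i) q := by
  have h := (hasP q i).mul (hasP q i)
  simp only [← pow_two] at h
  refine h.congr_fderiv ?_
  ext v; simp; ring

lemma hasSqDiv (q : Fin 6 → ℝ) (i : Fin 6) (c : ℝ) :
    HasFDerivAt (fun p : Fin 6 → ℝ => p i ^ 2 / c) ((2 * q i / c) • pr6 i) q := by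
  have h := (hasSq q i).mul_const c⁻¹
  simp only [← div_eq_mul_inv] at h
  refine h.congr_fderiv ?_
  ext v; simp [div_eq_mul_inv]; ring

def bil6 (i j : Fin 6) : (Fin 6 → ℝ) →L[ℝ] (Fin 6 → ℝ) →L[ℝ] ℝ :=
  (pr6 i).smulRight (pr6 j)

@[simp] lemma bil6_apply (i j : Fin 6) (q v : Fin 6 → ℝ) :
    bil6 i j q v = q i * v j := by
  simp [bil6]

def Dmap (m n a1 a2 a3 : ℝ) : (Fin 6 → ℝ) →L[ℝ] (Fin 6 → ℝ) →L[ℝ] ℝ :=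
  m • (bil6 0 0 + bil6 1 1 + bil6 2 2 + bil6 3 3 + bil6 4 4 + bil6 5 5)
  + (2*a1) • bil6 3 3 + (2*a2) • bil6 4 4 + (2*a3) • bil6 5 5
  + n • (bil6 0 3 + bil6 3 0 + bil6 1 4 + bil6 4 1 + bil6 2 5 + bil6 5 2)

lemma HasFDerivAt.divc {E : Type*} [NormedAddCommGroup E] [NormedSpace ℝ E]
    {f : E → ℝ} {f' : E →L[ℝ] ℝ} {x : E} (h : HasFDerivAt f f' x) (c : ℝ) :
    HasFDerivAt (fun y => f y / c) (c⁻¹ • f') x := by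
  simpa only [div_eq_mul_inv] using h.mul_const c⁻¹

set_option maxHeartbeats 1000000 in
set_option synthInstance.maxHeartbeats 400000 in
lemma Dmap_apply (m n a1 a2 a3 : ℝ) (q v : Fin 6 → ℝ) :
    Dmap m n a1 a2 a3 q v =
      m * (q 0 * v 0 + q 1 * v 1 + q 2 * v 2 + q 3 * v 3 + q 4 * v 4 + q 5 * v 5)
      + 2*a1*(q 3 * v 3) + 2*a2*(q 4 * v 4) + 2*a3*(q 5 * v 5)
      + n * (q 0 * v 3 + q 3 * v 0 + q 1 * v 4 + q 4 * v 1 + q 2 * v 5 + q 5 * v 2) := by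
  simp only [Dmap, ContinuousLinearMap.add_apply, ContinuousLinearMap.coe_smul',
    Pi.smul_apply, bil6_apply, smul_eq_mul]
  try ring

lemma hasF (l1 l2 l3 l4 m n : ℝ) (q : Fin 6 → ℝ) :
    HasFDerivAt (fun p => G4fun l1 l2 l3 l4 p + m * C1fun p + n * C2fun p)
      (Dmap m n (l4^2-l1^2)⁻¹ (l4^2-l2^2)⁻¹ (l4^2-l3^2)⁻¹ q) q := by
  have hG := ((hasSqDiv q 3 (l4^2-l1^2)).add (hasSqDiv q 4 (l4^2-l2^2))).add
      (hasSqDiv q 5 (l4^2-l3^2))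
  have hC1 := (((((((hasSq q 0).add (hasSq q 1)).add (hasSq q 2)).add (hasSq q 3)).add
        (hasSq q 4)).add (hasSq q 5)).divc 2).const_mul m
  have hC2 := ((((hasP q 0).mul (hasP q 3)).add ((hasP q 1).mul (hasP q 4))).add
        ((hasP q 2).mul (hasP q 5))).const_mul n
  have H := (hG.add hC1).add hC2
  have H' : HasFDerivAt (fun p => G4fun l1 l2 l3 l4 p + m * C1fun p + n * C2fun p) _ q := H
  refine H'.congr_fderiv ?_
  ext v
  simp [Dmap_apply, div_eq_mul_inv]
  ring

lemma hasC1 (q : Fin 6 → ℝ) : HasFDerivAt C1fun (Dmap 1 0 0 0 0 q) q := by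
  have H := ((((((hasSq q 0).add (hasSq q 1)).add (hasSq q 2)).add (hasSq q 3)).add
        (hasSq q 4)).add (hasSq q 5)).divc 2
  have H' : HasFDerivAt C1fun _ q := H
  refine H'.congr_fderiv ?_
  ext v; simp [Dmap_apply]; ring

lemma hasC2 (q : Fin 6 → ℝ) : HasFDerivAt C2fun (Dmap 0 1 0 0 0 q) q := by
  have H := (((hasP q 0).mul (hasP q 3)).add ((hasP q 1).mul (hasP q 4))).add
        ((hasP q 2).mul (hasP q 5))
  have H' : HasFDerivAt C2fun _ q := H
  refine H'.congr_fderiv ?_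
  ext v; simp [Dmap_apply]; ring

lemma inv_lt_inv_neg' {x y : ℝ} (hx : x < 0) (hxy : x < y) (hy : y < 0) :
    y⁻¹ < x⁻¹ := by
  have hpos : 0 < x * y := mul_pos_of_neg_of_neg hx hy
  rw [← mul_lt_mul_iff_of_pos_right hpos]
  have h1 : y⁻¹ * (x * y) = x := by
    rw [mul_comm x y, ← mul_assoc, inv_mul_cancel₀ hy.ne, one_mul]
  have h2 : x⁻¹ * (x * y) = y := by
    rw [← mul_assoc, inv_mul_cancel₀ hx.ne, one_mul]
  rw [h1, h2]; exact hxy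

lemma quad_nonneg {m n c x y : ℝ} (hm : 0 < m) (hdet : 0 < m * c - n ^ 2) :
    0 ≤ m * x ^ 2 + 2 * n * x * y + c * y ^ 2 := by
  nlinarith [sq_nonneg (m * x + n * y), mul_nonneg hdet.le (sq_nonneg y)]

lemma quad_pos {m n c x y : ℝ} (hm : 0 < m) (hdet : 0 < m * c - n ^ 2)
    (h : x ≠ 0 ∨ y ≠ 0) : 0 < m * x ^ 2 + 2 * n * x * y + c * y ^ 2 := by
  have hc : 0 < c := by nlinarith [sq_nonneg n]
  rcases h with hx | hy
  · nlinarith [sq_nonneg (c * y + n * x), mul_pos hdet (pow_two_pos_of_ne_zero hx)]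
  · nlinarith [sq_nonneg (m * x + n * y), mul_pos hdet (pow_two_pos_of_ne_zero hy)]

set_option maxHeartbeats 2000000 in
/-- `G4 + m C1 + n C2` is a Lyapunov function for the equilibrium
`(0,0,b,0,0,a)`: its derivative vanishes there, and its Hessian is definite
(positive or negative) on `W = ker dC1(e) ∩ ker dC2(e)`. -/
theorem G4_lyapunov_function
    (l1 l2 l3 l4 : ℝ) (h12 : l2 < l1) (h23 : l3 < l2) (h34 : l4 < l3)
    (s12 : 0 < l1 + l2) (s13 : 0 < l1 + l3) (s14 : 0 < l1 + l4)
    (s23 : 0 < l2 + l3) (s24 : 0 < l2 + l4) (s34 : 0 < l3 + l4)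
    (a b : ℝ) (hba : b ^ 2 < a ^ 2) :
    ∃ m n : ℝ,
      fderiv ℝ (fun p => G4fun l1 l2 l3 l4 p + m * C1fun p + n * C2fun p)
          ![0, 0, b, 0, 0, a] = 0 ∧
      ((∀ v : Fin 6 → ℝ, v ≠ 0 →
          fderiv ℝ C1fun ![0, 0, b, 0, 0, a] v = 0 →
          fderiv ℝ C2fun ![0, 0, b, 0, 0, a] v = 0 →
          0 < fderiv ℝ (fderiv ℝ (fun p => G4fun l1 l2 l3 l4 p + m * C1fun p + n * C2fun p))
                ![0, 0, b, 0, 0, a] v v) ∨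
       (∀ v : Fin 6 → ℝ, v ≠ 0 →
          fderiv ℝ C1fun ![0, 0, b, 0, 0, a] v = 0 →
          fderiv ℝ C2fun ![0, 0, b, 0, 0, a] v = 0 →
          fderiv ℝ (fderiv ℝ (fun p => G4fun l1 l2 l3 l4 p + m * C1fun p + n * C2fun p))
                ![0, 0, b, 0, 0, a] v v < 0)) := by
  have hd : 0 < a ^ 2 - b ^ 2 := by linarith
  have ha2 : 0 < a ^ 2 := by nlinarith [sq_nonneg b]
  set a1 : ℝ := (l4 ^ 2 - l1 ^ 2)⁻¹ with ha1def
  set a2 : ℝ := (l4 ^ 2 - l2 ^ 2)⁻¹ with ha2def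
  set a3 : ℝ := (l4 ^ 2 - l3 ^ 2)⁻¹ with ha3def
  have hA1 : l4 ^ 2 - l1 ^ 2 < 0 := by nlinarith
  have hA2 : l4 ^ 2 - l2 ^ 2 < 0 := by nlinarith
  have hA3 : l4 ^ 2 - l3 ^ 2 < 0 := by nlinarith
  have ha1n : a1 < 0 := inv_lt_zero.mpr hA1
  have ha2n : a2 < 0 := inv_lt_zero.mpr hA2
  have ha3n : a3 < 0 := inv_lt_zero.mpr hA3
  have h31 : a3 < a1 := inv_lt_inv_neg' hA1 (by nlinarith) hA3
  have h32 : a3 < a2 := inv_lt_inv_neg' hA2 (by nlinarith) hA3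
  set M : ℝ := -2 * a3 * a ^ 2 / (a ^ 2 - b ^ 2) with hMdef
  set N : ℝ := 2 * a3 * a * b / (a ^ 2 - b ^ 2) with hNdef
  have hM : 0 < M := by
    apply div_pos ?_ hd
    nlinarith
  have hdet1 : 0 < M * (M + 2 * a1) - N ^ 2 := by
    have hid : M * (M + 2 * a1) - N ^ 2
        = 4 * a ^ 2 / (a ^ 2 - b ^ 2) * (a3 * (a3 - a1)) := by
      rw [hMdef, hNdef]; field_simp; ring
    rw [hid]
    exact mul_pos (div_pos (by positivity) hd)
      (mul_pos_of_neg_of_neg ha3n (by linarith))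
  have hdet2 : 0 < M * (M + 2 * a2) - N ^ 2 := by
    have hid : M * (M + 2 * a2) - N ^ 2
        = 4 * a ^ 2 / (a ^ 2 - b ^ 2) * (a3 * (a3 - a2)) := by
      rw [hMdef, hNdef]; field_simp; ring
    rw [hid]
    exact mul_pos (div_pos (by positivity) hd)
      (mul_pos_of_neg_of_neg ha3n (by linarith))
  have hb0 : M * b + N * a = 0 := by rw [hMdef, hNdef]; field_simp; ring
  have hb5 : M * a + 2 * a3 * a + N * b = 0 := by rw [hMdef, hNdef]; field_simp; ring
  clear_value M N
  have he0 : (![0, 0, b, 0, 0, a] : Fin 6 → ℝ) 0 = 0 := rfl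
  have he1 : (![0, 0, b, 0, 0, a] : Fin 6 → ℝ) 1 = 0 := rfl
  have he2 : (![0, 0, b, 0, 0, a] : Fin 6 → ℝ) 2 = b := rfl
  have he3 : (![0, 0, b, 0, 0, a] : Fin 6 → ℝ) 3 = 0 := rfl
  have he4 : (![0, 0, b, 0, 0, a] : Fin 6 → ℝ) 4 = 0 := rfl
  have he5 : (![0, 0, b, 0, 0, a] : Fin 6 → ℝ) 5 = a := rfl
  refine ⟨M, N, ?_, ?_⟩
  · rw [(hasF l1 l2 l3 l4 M N ![0, 0, b, 0, 0, a]).fderiv]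
    ext v
    rw [ContinuousLinearMap.zero_apply, Dmap_apply, he0, he1, he2, he3, he4, he5,
      ← ha1def, ← ha2def, ← ha3def]
    linear_combination v 2 * hb0 + v 5 * hb5
  · left
    intro v hv h1 h2
    rw [(hasC1 ![0, 0, b, 0, 0, a]).fderiv, Dmap_apply, he0, he1, he2, he3, he4, he5] at h1
    rw [(hasC2 ![0, 0, b, 0, 0, a]).fderiv, Dmap_apply, he0, he1, he2, he3, he4, he5] at h2
    have hv5 : v 5 = 0 := by
      have h3 : (a ^ 2 - b ^ 2) * v 5 = 0 := by linear_combination a * h1 - b * h2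
      exact (mul_eq_zero.mp h3).resolve_left hd.ne'
    have hv2 : v 2 = 0 := by
      have h3 : (b ^ 2 - a ^ 2) * v 2 = 0 := by linear_combination b * h1 - a * h2
      exact (mul_eq_zero.mp h3).resolve_left (by linarith)
    have hfd : fderiv ℝ (fun p => G4fun l1 l2 l3 l4 p + M * C1fun p + N * C2fun p)
        = ⇑(Dmap M N (l4 ^ 2 - l1 ^ 2)⁻¹ (l4 ^ 2 - l2 ^ 2)⁻¹ (l4 ^ 2 - l3 ^ 2)⁻¹) :=
      funext fun q => (hasF l1 l2 l3 l4 M N q).fderiv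
    rw [hfd, ContinuousLinearMap.fderiv, Dmap_apply, hv2, hv5, ← ha1def, ← ha2def, ← ha3def]
    have hQ1 : 0 < M * (v 0) ^ 2 + 2 * N * (v 0) * (v 3) + (M + 2 * a1) * (v 3) ^ 2
        ∨ 0 < M * (v 1) ^ 2 + 2 * N * (v 1) * (v 4) + (M + 2 * a2) * (v 4) ^ 2 := by
      obtain ⟨i, hi⟩ := Function.ne_iff.mp hv
      fin_cases i
      · exact Or.inl (quad_pos hM hdet1 (Or.inl hi))
      · exact Or.inr (quad_pos hM hdet2 (Or.inl hi))
      · exact absurd hv2 hi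
      · exact Or.inl (quad_pos hM hdet1 (Or.inr hi))
      · exact Or.inr (quad_pos hM hdet2 (Or.inr hi))
      · exact absurd hv5 hi
    have hn1 : 0 ≤ M * (v 0) ^ 2 + 2 * N * (v 0) * (v 3) + (M + 2 * a1) * (v 3) ^ 2 :=
      quad_nonneg hM hdet1
    have hn2 : 0 ≤ M * (v 1) ^ 2 + 2 * N * (v 1) * (v 4) + (M + 2 * a2) * (v 4) ^ 2 :=
      quad_nonneg hM hdet2
    clear hfd hv h1 h2 hb0 hb5 hMdef hNdef ha1def ha2def ha3def he0 he1 he2 he3 he4 he5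
    clear_value a1 a2 a3
    rcases hQ1 with h | h <;> nlinarith [h, hn1, hn2]
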